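/- Let k, ℓ ≥ 0 with k + ℓ = n, let P, Q be real symmetric k×k matrices, S a real symmetric ℓ×ℓ matrix, and d ∈ ℝ^ℓ. Let M be the (2n+1)×(2n+1) real symmetric matrix that is block diagonal, with upper-left 2k×2k block (P Q; Q −P) and lower-right (2ℓ+1)×(2ℓ+1) block (0 S d; S 0 0; dᵀ 0 0). Then charpoly(M)(−X) = −charpoly(M)(X); in particular M satisfies the Euclidean austere condition (all odd-degree elementary symmetric functions of its eigenvalues vanish). -/

import Mathlib

open Polynomial Matrix

/-- The `k`-th elementary symmetric function of the eigenvalues of a square real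
matrix: `(-1)^k` times the coefficient of `X^(m-k)` in the characteristic
polynomial, and `0` when `k` exceeds the size of the matrix. -/
noncomputable def esymmEig {ι : Type*} [Fintype ι] [DecidableEq ι]
    (M : Matrix ι ι ℝ) (k : ℕ) : ℝ :=
  if k ≤ Fintype.card ι then
    (-1) ^ k * M.charpoly.coeff (Fintype.card ι - k)
  else 0

/-- Coefficients of `p(-X)` are the coefficients of `p` with alternating signs. -/
lemma coeff_comp_neg_X (p : ℝ[X]) (i : ℕ) :
    (p.comp (-X)).coeff i = (-1) ^ i * p.coeff i := by
  induction p using Polynomial.induction_on' with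
  | add p q hp hq => simp [add_comp, hp, hq, mul_add]
  | monomial n a =>
    rw [monomial_comp]
    rcases Nat.even_or_odd n with hn | hn
    · rw [hn.neg_pow]
      rcases eq_or_ne i n with h | h
      · subst h; simp [coeff_C_mul, coeff_X_pow, coeff_monomial, hn.neg_one_pow]
      · simp [coeff_C_mul, coeff_X_pow, coeff_monomial, h, Ne.symm h]
    · rw [hn.neg_pow]
      rcases eq_or_ne i n with h | h
      · subst h; simp [coeff_C_mul, coeff_X_pow, coeff_monomial, hn.neg_one_pow]
      · simp [coeff_C_mul, coeff_X_pow, coeff_monomial, h, Ne.symm h]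

/-- Evaluation of the characteristic polynomial is a determinant. -/
lemma eval_charpoly' {ι : Type*} [Fintype ι] [DecidableEq ι]
    (A : Matrix ι ι ℝ) (t : ℝ) :
    A.charpoly.eval t = det (t • (1 : Matrix ι ι ℝ) - A) := by
  rw [Matrix.charpoly, ← coe_evalRingHom, RingHom.map_det]
  congr 1
  ext i j
  rcases eq_or_ne i j with h | h
  · subst h; simp [charmatrix_apply_eq, Matrix.one_apply]
  · simp [charmatrix_apply_ne _ _ _ h, Matrix.one_apply, h]

/-- The `(2n+1)×(2n+1)` block-diagonal matrix with upper-left block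
`(P Q; Q -P)` (with `P`, `Q` symmetric `k×k`) and lower-right block
`(0 S d; S 0 0; dᵀ 0 0)` (with `S` symmetric `ℓ×ℓ`, `d ∈ ℝ^ℓ`, `k + ℓ = n`)
has odd characteristic polynomial; in particular all odd-degree elementary
symmetric functions of its eigenvalues vanish (the Euclidean austere condition). -/
theorem reducible_block_is_austere (n k l : ℕ) (hkl : k + l = n)
    (P Q : Matrix (Fin k) (Fin k) ℝ) (hP : P.IsSymm) (hQ : Q.IsSymm)
    (S : Matrix (Fin l) (Fin l) ℝ) (hS : S.IsSymm) (d : Fin l → ℝ)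
    (M : Matrix ((Fin k ⊕ Fin k) ⊕ (Fin l ⊕ (Fin l ⊕ Fin 1)))
      ((Fin k ⊕ Fin k) ⊕ (Fin l ⊕ (Fin l ⊕ Fin 1))) ℝ)
    (hM : M = Matrix.fromBlocks (Matrix.fromBlocks P Q Q (-P)) 0 0
      (Matrix.fromBlocks 0
        (fun i j => Sum.elim (fun j' => S i j') (fun _ => d i) j)
        (fun i j => Sum.elim (fun i' => S j i') (fun _ => d j) i) 0)) :
    M.charpoly.comp (-Polynomial.X) = -M.charpoly ∧
    (∀ j : ℕ, esymmEig M (2 * j + 1) = 0) := by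
  obtain ⟨U, hU⟩ : ∃ U : Matrix ((Fin k ⊕ Fin k) ⊕ (Fin l ⊕ (Fin l ⊕ Fin 1)))
      ((Fin k ⊕ Fin k) ⊕ (Fin l ⊕ (Fin l ⊕ Fin 1))) ℝ,
      U = Matrix.fromBlocks (Matrix.fromBlocks 0 1 (-1) 0) 0 0
        (Matrix.fromBlocks 1 0 0 (-1)) := ⟨_, rfl⟩
  obtain ⟨V, hV⟩ : ∃ V : Matrix ((Fin k ⊕ Fin k) ⊕ (Fin l ⊕ (Fin l ⊕ Fin 1)))
      ((Fin k ⊕ Fin k) ⊕ (Fin l ⊕ (Fin l ⊕ Fin 1))) ℝ,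
      V = Matrix.fromBlocks (Matrix.fromBlocks 0 (-1) 1 0) 0 0
        (Matrix.fromBlocks 1 0 0 (-1)) := ⟨_, rfl⟩
  have hUV : U * V = 1 := by
    subst hU hV
    simp [Matrix.fromBlocks_multiply, ← Matrix.fromBlocks_one]
  have hUM : U * M = (-M) * U := by
    subst hU hM
    obtain ⟨B, hB⟩ : ∃ B : Matrix (Fin l) (Fin l ⊕ Fin 1) ℝ, B = fun i j => Sum.elim (fun j' => S i j') (fun _ => d i) j := ⟨_, rfl⟩
    obtain ⟨C, hC⟩ : ∃ C : Matrix (Fin l ⊕ Fin 1) (Fin l) ℝ, C = fun i j => Sum.elim (fun i' => S j i') (fun _ => d j) i := ⟨_, rfl⟩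
    rw [← hB, ← hC]
    simp [Matrix.fromBlocks_multiply, Matrix.fromBlocks_neg]
  have hdet1 : det U * det V = 1 := by
    rw [← det_mul, hUV, det_one]
  have hsim : ∀ t : ℝ, det (t • (1 : Matrix ((Fin k ⊕ Fin k) ⊕ (Fin l ⊕ (Fin l ⊕ Fin 1)))
      ((Fin k ⊕ Fin k) ⊕ (Fin l ⊕ (Fin l ⊕ Fin 1))) ℝ) - M) = det (t • 1 + M) := by
    intro t
    have h1 : U * (t • 1 - M) * V = t • 1 + M := by
      rw [Matrix.mul_sub, Matrix.sub_mul, Matrix.mul_smul, Matrix.mul_one,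
        Matrix.smul_mul, hUV, hUM, Matrix.mul_assoc, hUV, Matrix.mul_one,
        sub_neg_eq_add]
    calc det (t • 1 - M)
        = det (t • 1 - M) * (det U * det V) := by rw [hdet1, mul_one]
      _ = det (U * (t • 1 - M) * V) := by rw [det_mul, det_mul]; ring
      _ = det (t • 1 + M) := by rw [h1]
  have hcard : Fintype.card ((Fin k ⊕ Fin k) ⊕ (Fin l ⊕ (Fin l ⊕ Fin 1)))
      = 2 * (k + l) + 1 := by
    simp [Fintype.card_sum]; ring
  have hoddcard : Odd (Fintype.card ((Fin k ⊕ Fin k) ⊕ (Fin l ⊕ (Fin l ⊕ Fin 1)))) :=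
    ⟨k + l, hcard⟩
  have hcomp : M.charpoly.comp (-Polynomial.X) = -M.charpoly := by
    apply Polynomial.funext
    intro t
    rw [eval_comp, eval_neg, eval_X, eval_neg, eval_charpoly', eval_charpoly']
    have h2 : (-t) • (1 : Matrix ((Fin k ⊕ Fin k) ⊕ (Fin l ⊕ (Fin l ⊕ Fin 1)))
        ((Fin k ⊕ Fin k) ⊕ (Fin l ⊕ (Fin l ⊕ Fin 1))) ℝ) - M = -(t • 1 + M) := by
      rw [neg_add, neg_smul, sub_eq_add_neg]
    rw [h2, det_neg, hoddcard.neg_one_pow, hsim t]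
    ring
  refine ⟨hcomp, fun j => ?_⟩
  rw [esymmEig]
  split_ifs with h
  · have he : Even (Fintype.card ((Fin k ⊕ Fin k) ⊕ (Fin l ⊕ (Fin l ⊕ Fin 1)))
        - (2 * j + 1)) := by
      refine ⟨(k + l) - j, ?_⟩
      rw [hcard] at h ⊢
      omega
    have h3 := congrArg (fun p : ℝ[X] =>
      p.coeff (Fintype.card ((Fin k ⊕ Fin k) ⊕ (Fin l ⊕ (Fin l ⊕ Fin 1))) - (2 * j + 1))) hcomp
    simp only [coeff_comp_neg_X, coeff_neg, he.neg_one_pow, one_mul] at h3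
    have h4 : M.charpoly.coeff
        (Fintype.card ((Fin k ⊕ Fin k) ⊕ (Fin l ⊕ (Fin l ⊕ Fin 1))) - (2 * j + 1)) = 0 := by
      linarith
    rw [h4, mul_zero]
  · rfl
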